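/- Let k be a real number and y a fixed point of ℝ³, and let g(x) = exp(i k ‖x − y‖)/(4π ‖x − y‖) for x ≠ y. Then g satisfies the Sommerfeld radiation condition: ‖x‖ · ( (x/‖x‖) ⬝ ∇g(x) − i k g(x) ) tends to 0 as ‖x‖ → ∞, where (x/‖x‖) ⬝ ∇g(x) denotes the radial derivative, i.e., the directional derivative of g at x in the direction x/‖x‖. -/

import Mathlib

open MeasureTheory Filter Real
open scoped Topology

noncomputable section

/-- Euclidean 3-space. -/
abbrev E3 := EuclideanSpace ℝ (Fin 3)

/-- The free-space Green's function of the Helmholtz operator `Δ + k²` in `ℝ³`. -/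
def greens (k : ℝ) (x y : E3) : ℂ :=
  Complex.exp (Complex.I * (k : ℂ) * (‖x - y‖ : ℂ)) / ((4 * Real.pi * ‖x - y‖ : ℝ) : ℂ)

lemma hasFDerivAt_norm' {v : E3} (hv : v ≠ 0) :
    HasFDerivAt (fun z : E3 => ‖z‖) (innerSL ℝ ((‖v‖⁻¹ : ℝ) • v)) v := by
  have h2 : HasFDerivAt (fun z : E3 => ‖z‖ ^ 2) (2 • innerSL ℝ v) v :=
    (hasStrictFDerivAt_norm_sq v).hasFDerivAt
  have hs : HasDerivAt Real.sqrt (1 / (2 * Real.sqrt (‖v‖ ^ 2))) (‖v‖ ^ 2) :=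
    Real.hasDerivAt_sqrt (pow_ne_zero 2 (norm_ne_zero_iff.mpr hv))
  have h3 := hs.comp_hasFDerivAt v h2
  have heq : (fun z : E3 => ‖z‖) = Real.sqrt ∘ (fun z : E3 => ‖z‖ ^ 2) := by
    funext z; simp [Real.sqrt_sq (norm_nonneg z)]
  rw [heq]
  refine h3.congr_fderiv ?_
  ext d
  have hsq : Real.sqrt (‖v‖ ^ 2) = ‖v‖ := Real.sqrt_sq (norm_nonneg v)
  have hv0 : ‖v‖ ≠ 0 := norm_ne_zero_iff.mpr hv
  simp [hsq, real_inner_smul_left, ContinuousLinearMap.smul_apply, two_smul]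
  field_simp
  ring

lemma greens_fderiv_apply (k : ℝ) (y x : E3) (hx : x ≠ y) (d : E3) :
    fderiv ℝ (fun z => greens k z y) x d =
      (inner ℝ ((‖x - y‖⁻¹ : ℝ) • (x - y)) d : ℝ) •
        (Complex.I * k * greens k x y -
          Complex.exp (Complex.I * k * (‖x - y‖ : ℝ)) / ((4 * π * ‖x - y‖ ^ 2 : ℝ) : ℂ)) := by
  have hv : x - y ≠ 0 := sub_ne_zero.mpr hx
  have hr : (0:ℝ) < ‖x - y‖ := norm_pos_iff.mpr hv
  set r := ‖x - y‖ with hrdef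
  -- derivative of the norm of (z - y)
  have hsub : HasFDerivAt (fun z : E3 => z - y) (ContinuousLinearMap.id ℝ E3) x :=
    (hasFDerivAt_id x).sub_const y
  have hN : HasFDerivAt (fun z : E3 => ‖z - y‖)
      ((innerSL ℝ ((r⁻¹ : ℝ) • (x - y))).comp (ContinuousLinearMap.id ℝ E3)) x :=
    (hasFDerivAt_norm' hv).comp x hsub
  -- derivative of the radial profile h
  have hf1 : HasDerivAt (fun t : ℝ => Complex.exp (Complex.I * k * (t:ℂ)))
      (Complex.exp (Complex.I * k * (r:ℂ)) * (Complex.I * k * 1)) r := by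
    exact (((hasDerivAt_id r).ofReal_comp).const_mul (Complex.I * k)).cexp
  have hg1 : HasDerivAt (fun t : ℝ => ((4 * π * t : ℝ) : ℂ)) ((4 * π : ℝ) : ℂ) r := by
    have := ((hasDerivAt_id r).const_mul (4 * π)).ofReal_comp
    simpa using this
  have hne : ((4 * π * r : ℝ) : ℂ) ≠ 0 := by
    simp only [ne_eq, Complex.ofReal_eq_zero]
    positivity
  have hh := hf1.div hg1 hne
  have key : (Complex.exp (Complex.I * k * (r:ℂ)) * (Complex.I * k * 1) * ((4 * π * r : ℝ) : ℂ)
        - Complex.exp (Complex.I * k * (r:ℂ)) * ((4 * π : ℝ) : ℂ)) / ((4 * π * r : ℝ) : ℂ) ^ 2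
      = Complex.I * k * greens k x y -
          Complex.exp (Complex.I * k * (r:ℝ)) / ((4 * π * r ^ 2 : ℝ) : ℂ) := by
    rw [greens, ← hrdef]
    have hrC : ((r:ℂ)) ≠ 0 := by simpa using hr.ne'
    have hπC : ((π:ℂ)) ≠ 0 := by simpa using Real.pi_ne_zero
    push_cast
    field_simp
  rw [key] at hh
  have htot := (hh.hasFDerivAt).comp x hN
  have hfun : (fun z : E3 => greens k z y) =
      (fun t : ℝ => Complex.exp (Complex.I * k * (t:ℂ)) / ((4 * π * t : ℝ) : ℂ)) ∘
        (fun z : E3 => ‖z - y‖) := rfl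
  rw [hfun, (show HasFDerivAt ((fun t : ℝ => Complex.exp (Complex.I * k * (t:ℂ)) / ((4 * π * t : ℝ) : ℂ)) ∘
      (fun z : E3 => ‖z - y‖)) _ x from htot).fderiv]
  simp only [ContinuousLinearMap.coe_comp', Function.comp_apply,
    ContinuousLinearMap.smulRight_apply, ContinuousLinearMap.one_apply, innerSL_apply_apply,
    ContinuousLinearMap.coe_id', id_eq, ContinuousLinearMap.toSpanSingleton_apply]

/-- For real `k` and fixed `y ∈ ℝ³`, `g(x) = exp(i k ‖x − y‖)/(4π ‖x − y‖)` satisfies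
the Sommerfeld radiation condition: `‖x‖ · ((x/‖x‖) ⬝ ∇g(x) − i k g(x)) → 0` as `‖x‖ → ∞`,
where `(x/‖x‖) ⬝ ∇g(x)` is the directional derivative of `g` at `x` in direction `x/‖x‖`. -/
theorem greens_radiation_condition (k : ℝ) (y : E3) :
    Filter.Tendsto
      (fun x : E3 => (‖x‖ : ℂ) *
        (fderiv ℝ (fun z => greens k z y) x (‖x‖⁻¹ • x)
          - Complex.I * (k : ℂ) * greens k x y))
      (Filter.comap (fun x : E3 => ‖x‖) Filter.atTop) (𝓝 0) := by
  set l := Filter.comap (fun x : E3 => ‖x‖) Filter.atTop with hl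
  have htend : Tendsto (fun x : E3 => ‖x‖) l atTop := tendsto_comap
  set C : ℝ := (2 * |k| * ‖y‖ + 1) / π with hCdef
  apply squeeze_zero_norm' (a := fun x : E3 => C / ‖x‖)
  · filter_upwards [htend.eventually (eventually_ge_atTop (2 * ‖y‖ + 1))] with x hx
    have hy0 : (0:ℝ) ≤ ‖y‖ := norm_nonneg y
    have hn : (0:ℝ) < ‖x‖ := by linarith
    have hxy : |‖x‖ - ‖x - y‖| ≤ ‖y‖ := by
      simpa using abs_norm_sub_norm_le x (x - y)
    obtain ⟨h1, h2⟩ := abs_le.mp hxy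
    have hrge : ‖x‖ / 2 ≤ ‖x - y‖ := by linarith
    have hr : (0:ℝ) < ‖x - y‖ := by linarith
    have hxy' : x ≠ y := by
      intro h; rw [h] at hr; simp at hr
    rw [greens_fderiv_apply k y x hxy']
    set r := ‖x - y‖ with hrdef
    set n := ‖x‖ with hndef
    set u : E3 := (r⁻¹ : ℝ) • (x - y) with hu
    set dv : E3 := (n⁻¹ : ℝ) • x with hdv
    set c : ℝ := inner ℝ u dv with hc
    set e : ℂ := Complex.exp (Complex.I * k * (r:ℝ)) with he
    set G : ℂ := greens k x y with hG
    set Q : ℂ := e / ((4 * π * r ^ 2 : ℝ) : ℂ) with hQ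
    have hunorm : ‖u‖ = 1 := norm_smul_inv_norm (sub_ne_zero.mpr hxy')
    have hdnorm : ‖dv‖ = 1 := norm_smul_inv_norm (norm_pos_iff.mp hn)
    have hcle : |c| ≤ 1 := by
      have := abs_real_inner_le_norm u dv
      rwa [hunorm, hdnorm, mul_one] at this
    -- |c - 1| ≤ 2‖y‖/r
    have hdd : (inner ℝ dv dv : ℝ) = 1 := by
      rw [real_inner_self_eq_norm_mul_norm, hdnorm]; ring
    have hc1 : |c - 1| ≤ 2 * ‖y‖ / r := by
      have hsplit : c - 1 = (inner ℝ (u - dv) dv : ℝ) := by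
        rw [inner_sub_left, hdd]
      have hb1 : |c - 1| ≤ ‖u - dv‖ := by
        rw [hsplit]
        calc |(inner ℝ (u - dv) dv : ℝ)| ≤ ‖u - dv‖ * ‖dv‖ := abs_real_inner_le_norm _ _
          _ = ‖u - dv‖ := by rw [hdnorm, mul_one]
      have hud : u - dv = (r⁻¹ - n⁻¹) • x - (r⁻¹ : ℝ) • y := by
        rw [hu, hdv, smul_sub, sub_smul]; abel
      have hb2 : ‖u - dv‖ ≤ |r⁻¹ - n⁻¹| * n + r⁻¹ * ‖y‖ := by
        rw [hud]
        calc ‖(r⁻¹ - n⁻¹) • x - (r⁻¹ : ℝ) • y‖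
            ≤ ‖(r⁻¹ - n⁻¹) • x‖ + ‖(r⁻¹ : ℝ) • y‖ := norm_sub_le _ _
          _ = |r⁻¹ - n⁻¹| * n + r⁻¹ * ‖y‖ := by
              rw [norm_smul, norm_smul, Real.norm_eq_abs, Real.norm_eq_abs,
                abs_of_pos (inv_pos.mpr hr)]
      have hb3 : |r⁻¹ - n⁻¹| * n ≤ ‖y‖ / r := by
        have heq : r⁻¹ - n⁻¹ = (n - r) / (r * n) := by field_simp
        rw [heq, abs_div, abs_of_pos (by positivity : (0:ℝ) < r * n)]
        rw [div_mul_eq_mul_div, div_le_div_iff₀ (by positivity) hr]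
        have : |n - r| ≤ ‖y‖ := by rw [hndef, hrdef]; exact hxy
        calc |n - r| * n * r ≤ ‖y‖ * n * r := by gcongr
          _ = ‖y‖ * (r * n) := by ring
      have hb4 : r⁻¹ * ‖y‖ = ‖y‖ / r := inv_mul_eq_div _ _
      calc |c - 1| ≤ |r⁻¹ - n⁻¹| * n + r⁻¹ * ‖y‖ := hb1.trans hb2
        _ ≤ ‖y‖ / r + ‖y‖ / r := by rw [hb4]; gcongr
        _ = 2 * ‖y‖ / r := by ring
    -- norms of e, G, Q
    have henorm : ‖e‖ = 1 := by
      rw [he, Complex.norm_exp]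
      norm_num
    have hGnorm : ‖G‖ = 1 / (4 * π * r) := by
      rw [hG, greens, norm_div, Complex.norm_real, ← hrdef, ← he, henorm,
        Real.norm_eq_abs, abs_of_pos (by positivity)]
    have hQnorm : ‖Q‖ = 1 / (4 * π * r ^ 2) := by
      rw [hQ, norm_div, henorm, Complex.norm_real, Real.norm_eq_abs,
        abs_of_pos (by positivity)]
    -- rearrange
    have hsplit2 : (c • (Complex.I * k * G - Q) - Complex.I * k * G : ℂ)
        = ((c:ℂ) - 1) * (Complex.I * k * G) - (c:ℂ) * Q := by
      rw [Complex.real_smul]; ring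
    have hπ : (0:ℝ) < π := Real.pi_pos
    calc ‖(↑n : ℂ) * (c • (Complex.I * k * G - Q) - Complex.I * k * G)‖
        = n * ‖((c:ℂ) - 1) * (Complex.I * k * G) - (c:ℂ) * Q‖ := by
          rw [norm_mul, Complex.norm_real, Real.norm_eq_abs, abs_of_pos hn, hsplit2]
      _ ≤ n * (‖((c:ℂ) - 1) * (Complex.I * k * G)‖ + ‖(c:ℂ) * Q‖) := by
          gcongr; exact norm_sub_le _ _
      _ = n * (|c - 1| * (|k| * ‖G‖) + |c| * ‖Q‖) := by
          have e1 : ((c:ℂ) - 1) = ((c - 1 : ℝ) : ℂ) := by push_cast; ring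
          rw [e1]
          simp only [norm_mul, Complex.norm_real, Real.norm_eq_abs, Complex.norm_I]
          ring
      _ ≤ n * ((2 * ‖y‖ / r) * (|k| * (1 / (4 * π * r))) + 1 * (1 / (4 * π * r ^ 2))) := by
          rw [hGnorm, hQnorm]; gcongr
      _ = n * (2 * |k| * ‖y‖ + 1) / (4 * π * r ^ 2) := by
          field_simp
      _ ≤ C / n := by
          rw [hCdef, div_div, div_le_div_iff₀ (by positivity) (by positivity)]
          have hn2r : n ≤ 2 * r := by linarith
          have h4 : n ^ 2 ≤ 4 * r ^ 2 := by nlinarith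
          nlinarith [mul_le_mul_of_nonneg_left h4
            (mul_nonneg hπ.le (by positivity : (0:ℝ) ≤ 2 * |k| * ‖y‖ + 1))]
  · have h0 : Tendsto (fun t : ℝ => C * t⁻¹) atTop (𝓝 (C * 0)) :=
      tendsto_inv_atTop_zero.const_mul C
    rw [mul_zero] at h0
    have h1 : Tendsto (fun t : ℝ => C / t) atTop (𝓝 0) :=
      h0.congr fun t => (div_eq_mul_inv C t).symm
    exact h1.comp htend

end
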